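/- Let λ_max = (1/(n(1−α))) · max{ |AᵀWY|, max_{1≤j≤p} |XⱼᵀWY| }, where AᵀWY = Σᵢ wᵢAᵢYᵢ and XⱼᵀWY = Σᵢ wᵢXᵢⱼYᵢ. Then the zero parameter vector θ = 0 ∈ ℝ^{2p+1} is a coordinatewise minimizer of Q (i.e., for each coordinate of θ, the value 0 globally minimizes Q as a function of that coordinate with all other coordinates held at 0) if and only if λ ≥ λ_max. -/

import Mathlib

/-- Soft-thresholding operator `S(x, u) = sign(x) · (|x| − u)₊`. -/
noncomputable def softThresh (x u : ℝ) : ℝ := Real.sign x * max (|x| - u) 0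

/-- Reparametrized weighted loss
`L*(θ) = (1/(2n)) Σᵢ wᵢ (Yᵢ − ψ₀Aᵢ − Σⱼ Xᵢⱼβⱼ − Σⱼ ψ₀τⱼβⱼ AᵢXᵢⱼ)²`. -/
noncomputable def Lstar (n p : ℕ) (Y A : Fin n → ℝ) (X : Fin n → Fin p → ℝ)
    (w : Fin n → ℝ) (β : Fin p → ℝ) (ψ0 : ℝ) (τ : Fin p → ℝ) : ℝ :=
  1 / (2 * (n : ℝ)) * ∑ i, w i *
    (Y i - ψ0 * A i - (∑ j, X i j * β j) - ∑ j, ψ0 * τ j * β j * A i * X i j) ^ 2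

/-- Penalized objective
`Q(θ) = L*(θ) + λ(1−α)(Σⱼ|βⱼ| + |ψ₀|) + λα Σⱼ|τⱼ|`. -/
noncomputable def Qobj (n p : ℕ) (Y A : Fin n → ℝ) (X : Fin n → Fin p → ℝ)
    (w : Fin n → ℝ) (lam alpha : ℝ) (β : Fin p → ℝ) (ψ0 : ℝ) (τ : Fin p → ℝ) : ℝ :=
  Lstar n p Y A X w β ψ0 τ
    + lam * (1 - alpha) * ((∑ j, |β j|) + |ψ0|) + lam * alpha * ∑ j, |τ j|

lemma quad_min_iff (a b m : ℝ) (ha : 0 ≤ a) (hm : 0 ≤ m) :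
    (∀ t : ℝ, 0 ≤ a * t ^ 2 - b * t + m * |t|) ↔ |b| ≤ m := by
  clear hm
  constructor
  · intro h
    rw [abs_le]
    constructor
    · by_contra hc
      push_neg at hc
      have hapos : (0:ℝ) < a + 1 := by linarith
      set t : ℝ := (b + m) / (a + 1) with htdef
      have htneg : t < 0 := div_neg_of_neg_of_pos (by linarith) hapos
      have ht : t * (a + 1) = b + m := div_mul_cancel₀ _ (ne_of_gt hapos)
      have h1 := h t
      rw [abs_of_neg htneg] at h1
      nlinarith [mul_pos_of_neg_of_neg htneg htneg]
    · by_contra hc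
      push_neg at hc
      have hapos : (0:ℝ) < a + 1 := by linarith
      set t : ℝ := (b - m) / (a + 1) with htdef
      have htpos : 0 < t := div_pos (by linarith) hapos
      have ht : t * (a + 1) = b - m := div_mul_cancel₀ _ (ne_of_gt hapos)
      have h1 := h t
      rw [abs_of_pos htpos] at h1
      nlinarith [mul_pos htpos htpos]
  · intro h t
    have h1 : b * t ≤ |b| * |t| := by
      calc b * t ≤ |b * t| := le_abs_self _
        _ = |b| * |t| := abs_mul b t
    nlinarith [sq_nonneg t, mul_nonneg ha (sq_nonneg t), abs_nonneg t,
      mul_nonneg (sub_nonneg.2 h) (abs_nonneg t)]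

lemma sum_expand (n : ℕ) (Y Z w : Fin n → ℝ) (t : ℝ) :
    ∑ i, w i * (Y i - t * Z i) ^ 2 =
      ∑ i, w i * (Y i) ^ 2 - 2 * t * ∑ i, w i * Z i * Y i + t ^ 2 * ∑ i, w i * (Z i) ^ 2 := by
  rw [Finset.mul_sum, Finset.mul_sum, ← Finset.sum_sub_distrib, ← Finset.sum_add_distrib]
  exact Finset.sum_congr rfl fun i _ => by ring


/-- `λ_max` characterization: the zero parameter vector is a coordinatewise
minimizer of `Q` iff
`λ ≥ λ_max = (1/(n(1−α))) · max{|AᵀWY|, maxⱼ |XⱼᵀWY|}`. -/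
theorem stmt9 (n p : ℕ) (hn : 1 ≤ n) (hp : 0 < p) (Y A : Fin n → ℝ)
    (X : Fin n → Fin p → ℝ)
    (w : Fin n → ℝ) (hw : ∀ i, 0 ≤ w i) (hA : ∀ i, A i = 0 ∨ A i = 1)
    (lam alpha : ℝ) (hlam : 0 ≤ lam) (halpha : 0 < alpha ∧ alpha < 1) :
    let lamMax : ℝ := 1 / ((n : ℝ) * (1 - alpha)) *
      max |∑ i, w i * A i * Y i|
        (Finset.sup' (Finset.univ : Finset (Fin p)) ⟨⟨0, hp⟩, Finset.mem_univ _⟩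
          fun j => |∑ i, w i * X i j * Y i|)
    ((∀ t : ℝ, Qobj n p Y A X w lam alpha 0 0 0 ≤ Qobj n p Y A X w lam alpha 0 t 0) ∧
     (∀ (j : Fin p) (t : ℝ), Qobj n p Y A X w lam alpha 0 0 0 ≤
        Qobj n p Y A X w lam alpha (Function.update (0 : Fin p → ℝ) j t) 0 0) ∧
     (∀ (j : Fin p) (t : ℝ), Qobj n p Y A X w lam alpha 0 0 0 ≤
        Qobj n p Y A X w lam alpha 0 0 (Function.update (0 : Fin p → ℝ) j t)))
      ↔ lam ≥ lamMax := by
  clear hA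
  intro lamMax
  obtain ⟨ha1, ha2⟩ := halpha
  have hN : (0:ℝ) < n := by exact_mod_cast Nat.lt_of_lt_of_le Nat.zero_lt_one hn
  have hne : (n:ℝ) ≠ 0 := ne_of_gt hN
  have h1a : (0:ℝ) < 1 - alpha := by linarith
  set m : ℝ := lam * (1 - alpha) with hmdef
  have hm : 0 ≤ m := mul_nonneg hlam (le_of_lt h1a)
  -- generic slice equivalence
  have gen : ∀ (Z : Fin n → ℝ) (f : ℝ → ℝ),
      (∀ t, f t = Qobj n p Y A X w lam alpha 0 0 0 +
        ((1/(2*(n:ℝ)) * ∑ i, w i * (Z i)^2) * t^2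
          - ((1/(n:ℝ)) * ∑ i, w i * Z i * Y i) * t + m * |t|)) →
      ((∀ t, Qobj n p Y A X w lam alpha 0 0 0 ≤ f t) ↔
        |∑ i, w i * Z i * Y i| ≤ (n:ℝ) * m) := by
    intro Z f hf
    have ha : 0 ≤ 1/(2*(n:ℝ)) * ∑ i, w i * (Z i)^2 :=
      mul_nonneg (by positivity)
        (Finset.sum_nonneg fun i _ => mul_nonneg (hw i) (sq_nonneg _))
    have step : (∀ t, Qobj n p Y A X w lam alpha 0 0 0 ≤ f t) ↔
        (∀ t : ℝ, 0 ≤ (1/(2*(n:ℝ)) * ∑ i, w i * (Z i)^2) * t^2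
          - ((1/(n:ℝ)) * ∑ i, w i * Z i * Y i) * t + m * |t|) :=
      ⟨fun h t => by have := h t; rw [hf t] at this; linarith,
       fun h t => by rw [hf t]; linarith [h t]⟩
    rw [step, quad_min_iff _ _ _ ha hm, abs_mul,
      abs_of_pos (show (0:ℝ) < 1/(n:ℝ) by positivity), one_div,
      inv_mul_le_iff₀ hN]
  -- ψ0 slice
  have idenψ : ∀ t, Qobj n p Y A X w lam alpha 0 t 0 =
      Qobj n p Y A X w lam alpha 0 0 0 +
      ((1/(2*(n:ℝ)) * ∑ i, w i * (A i)^2) * t^2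
        - ((1/(n:ℝ)) * ∑ i, w i * A i * Y i) * t + m * |t|) := by
    intro t
    simp only [Qobj, Lstar, Pi.zero_apply, mul_zero, zero_mul, Finset.sum_const_zero,
      abs_zero, sub_zero, add_zero, zero_add]
    rw [sum_expand n Y A w t, hmdef]
    field_simp
    ring
  have C1 := gen A _ idenψ
  -- β_j slices
  have idenβ : ∀ (j : Fin p) (t : ℝ),
      Qobj n p Y A X w lam alpha (Function.update (0 : Fin p → ℝ) j t) 0 0 =
      Qobj n p Y A X w lam alpha 0 0 0 +
      ((1/(2*(n:ℝ)) * ∑ i, w i * (X i j)^2) * t^2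
        - ((1/(n:ℝ)) * ∑ i, w i * X i j * Y i) * t + m * |t|) := by
    intro j t
    have hs : ∀ i : Fin n, (∑ j', X i j' * Function.update (0 : Fin p → ℝ) j t j')
        = t * X i j := by
      intro i
      simp [Function.update_apply, mul_ite, Finset.sum_ite_eq', mul_comm]
    have hs2 : (∑ j', |Function.update (0 : Fin p → ℝ) j t j'|) = |t| := by
      simp [Function.update_apply, apply_ite abs, Finset.sum_ite_eq']
    simp only [Qobj, Lstar, Pi.zero_apply, mul_zero, zero_mul, Finset.sum_const_zero,
      abs_zero, sub_zero, add_zero, zero_add, hs, hs2]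
    rw [sum_expand n Y (fun i => X i j) w t, hmdef]
    field_simp
    ring
  have C2 : ∀ j : Fin p,
      (∀ t : ℝ, Qobj n p Y A X w lam alpha 0 0 0 ≤
        Qobj n p Y A X w lam alpha (Function.update (0 : Fin p → ℝ) j t) 0 0) ↔
      |∑ i, w i * X i j * Y i| ≤ (n:ℝ) * m :=
    fun j => gen (fun i => X i j) _ (idenβ j)
  -- τ slices are trivially minimized
  have C3 : ∀ (j : Fin p) (t : ℝ), Qobj n p Y A X w lam alpha 0 0 0 ≤
      Qobj n p Y A X w lam alpha 0 0 (Function.update (0 : Fin p → ℝ) j t) := by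
    intro j t
    have hs2 : (∑ j', |Function.update (0 : Fin p → ℝ) j t j'|) = |t| := by
      simp [Function.update_apply, apply_ite abs, Finset.sum_ite_eq']
    have hL : Lstar n p Y A X w 0 0 (Function.update (0 : Fin p → ℝ) j t) =
        Lstar n p Y A X w 0 0 0 := by
      simp [Lstar]
    simp only [Qobj, hL, hs2, Pi.zero_apply, abs_zero, Finset.sum_const_zero]
    have : 0 ≤ lam * alpha * |t| :=
      mul_nonneg (mul_nonneg hlam (le_of_lt ha1)) (abs_nonneg t)
    linarith
  -- assemble
  have hkey : (n:ℝ) * m = lam * ((n:ℝ) * (1 - alpha)) := by rw [hmdef]; ring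
  constructor
  · rintro ⟨h1, h2, -⟩
    rw [C1] at h1
    show lamMax ≤ lam
    rw [show lamMax = (max |∑ i, w i * A i * Y i|
        (Finset.sup' (Finset.univ : Finset (Fin p)) ⟨⟨0, hp⟩, Finset.mem_univ _⟩
          fun j => |∑ i, w i * X i j * Y i|)) / ((n:ℝ) * (1 - alpha)) from
      one_div_mul_eq_div _ _, div_le_iff₀ (by positivity), max_le_iff]
    refine (and_congr_right' (Finset.sup'_le_iff ..)).2 ?_
    refine ⟨by rw [← hkey]; exact h1, fun j _ => ?_⟩
    rw [← hkey]
    exact (C2 j).1 (h2 j)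
  · intro hge
    have hge' : max |∑ i, w i * A i * Y i|
        (Finset.sup' (Finset.univ : Finset (Fin p)) ⟨⟨0, hp⟩, Finset.mem_univ _⟩
          fun j => |∑ i, w i * X i j * Y i|) ≤ (n:ℝ) * m := by
      rw [hkey, ← div_le_iff₀ (show (0:ℝ) < (n:ℝ) * (1 - alpha) by positivity),
        ← one_div_mul_eq_div]
      exact hge
    rw [max_le_iff] at hge'
    exact ⟨C1.2 hge'.1, fun j => (C2 j).2 ((Finset.sup'_le_iff ..).1 hge'.2 j (Finset.mem_univ j)), C3⟩
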